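/- Let n ≥ 1 and let v₁, v₂ be binary vectors of length n with m(v₁) = m(v₂). If x₁ and x₂ are positive integers whose parity vectors of length n equal v₁ and v₂ respectively, then 2^n divides the integer P(v₁)·x₂ − P(v₂)·x₁. (Paper's Theorem 4.7.) -/
import Mathlib


/-- The Collatz map `T`. -/
def collatzT (N : ℕ) : ℕ := if N % 2 = 0 then N / 2 else (3 * N + 1) / 2

/-- The parity vector of length `n` of `N`: entry `k` is `true` iff `T^[k] N` is odd. -/
def parityVec (N n : ℕ) : List Bool :=
  (List.range n).map (fun k => decide ((collatzT^[k] N) % 2 = 1))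

/-- `m(v)`: the number of ones of a binary vector. -/
def mOnes (v : List Bool) : ℕ := v.count true

/-- `P(v)`: the characteristic number of a binary vector,
`P(v) = Σ_{k=1}^{m} 3^(m-k) * 2^(j_k - 1)` where `j_1 < … < j_m` are the positions of ones. -/
def Pchar : List Bool → ℕ
  | [] => 0
  | e :: rest => (if e then 3 ^ mOnes rest else 0) + 2 * Pchar rest

lemma parityVec_succ (x n : ℕ) :
    parityVec x (n + 1) = decide (x % 2 = 1) :: parityVec (collatzT x) n := by
  simp only [parityVec, List.range_succ_eq_map, List.map_cons, List.map_map,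
    Function.iterate_zero_apply]
  congr 1

lemma key (n : ℕ) : ∀ x : ℕ,
    2 ^ n * (collatzT^[n] x) = 3 ^ mOnes (parityVec x n) * x + Pchar (parityVec x n) := by
  induction n with
  | zero => intro x; simp [parityVec, mOnes, Pchar]
  | succ n ih =>
    intro x
    rw [parityVec_succ, Function.iterate_succ_apply]
    have := ih (collatzT x)
    rcases Nat.even_or_odd x with he | ho
    · have hx2 : x % 2 = 0 := Nat.even_iff.mp he
      have hb : decide (x % 2 = 1) = false := by simp [hx2]
      have hT : collatzT x = x / 2 := by simp [collatzT, hx2]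
      rw [hb]
      simp only [mOnes, List.count_cons, Pchar, if_neg (by simp : ¬ (false = true))]
      simp only [mOnes] at this
      have h2 : 2 * (x / 2) = x := Nat.two_mul_div_two_of_even he
      calc 2 ^ (n+1) * collatzT^[n] (collatzT x)
          = 2 * (2 ^ n * collatzT^[n] (collatzT x)) := by ring
        _ = 2 * (3 ^ (parityVec (collatzT x) n).count true * (collatzT x)
              + Pchar (parityVec (collatzT x) n)) := by rw [this]
        _ = 3 ^ (parityVec (collatzT x) n).count true * (2 * (x / 2))
              + 2 * Pchar (parityVec (collatzT x) n) := by rw [hT]; ring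
        _ = _ := by rw [h2]; simp
    · have hx2 : x % 2 = 1 := Nat.odd_iff.mp ho
      have hb : decide (x % 2 = 1) = true := by simp [hx2]
      have hT : 2 * collatzT x = 3 * x + 1 := by
        have : ¬ x % 2 = 0 := by omega
        simp only [collatzT, if_neg this]
        omega
      rw [hb]
      simp only [mOnes, List.count_cons, Pchar, if_pos rfl]
      simp only [mOnes] at this
      calc 2 ^ (n+1) * collatzT^[n] (collatzT x)
          = 2 * (2 ^ n * collatzT^[n] (collatzT x)) := by ring
        _ = 2 * (3 ^ (parityVec (collatzT x) n).count true * (collatzT x)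
              + Pchar (parityVec (collatzT x) n)) := by rw [this]
        _ = 3 ^ (parityVec (collatzT x) n).count true * (2 * collatzT x)
              + 2 * Pchar (parityVec (collatzT x) n) := by ring
        _ = 3 ^ (parityVec (collatzT x) n).count true * (3 * x + 1)
              + 2 * Pchar (parityVec (collatzT x) n) := by rw [hT]
        _ = _ := by
              simp only [beq_self_eq_true, if_true]
              rw [pow_succ]
              ring

/-- Paper's Theorem 4.7: if v₁, v₂ have the same length n and the same number of
ones, and x₁, x₂ realize them as parity vectors, then
`2^n ∣ P v₁ * x₂ - P v₂ * x₁` in ℤ. -/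
theorem stmt_10 (n : ℕ) (hn : 1 ≤ n) (v₁ v₂ : List Bool)
    (h₁ : v₁.length = n) (h₂ : v₂.length = n) (hm : mOnes v₁ = mOnes v₂)
    (x₁ x₂ : ℕ) (hx₁ : 0 < x₁) (hx₂ : 0 < x₂)
    (hp₁ : parityVec x₁ n = v₁) (hp₂ : parityVec x₂ n = v₂) :
    (2 : ℤ) ^ n ∣ (Pchar v₁ : ℤ) * x₂ - (Pchar v₂ : ℤ) * x₁ := by
  have k₁ := key n x₁
  have k₂ := key n x₂
  rw [hp₁] at k₁
  rw [hp₂] at k₂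
  have K₁ : (2:ℤ) ^ n * (collatzT^[n] x₁ : ℤ) = 3 ^ mOnes v₁ * x₁ + Pchar v₁ := by
    exact_mod_cast congrArg (Nat.cast : ℕ → ℤ) k₁
  have K₂ : (2:ℤ) ^ n * (collatzT^[n] x₂ : ℤ) = 3 ^ mOnes v₂ * x₂ + Pchar v₂ := by
    exact_mod_cast congrArg (Nat.cast : ℕ → ℤ) k₂
  refine ⟨(collatzT^[n] x₁ : ℤ) * x₂ - (collatzT^[n] x₂ : ℤ) * x₁, ?_⟩
  have : (Pchar v₁ : ℤ) = 2 ^ n * (collatzT^[n] x₁ : ℤ) - 3 ^ mOnes v₁ * x₁ := by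
    linarith [K₁]
  rw [this, hm]
  have : (Pchar v₂ : ℤ) = 2 ^ n * (collatzT^[n] x₂ : ℤ) - 3 ^ mOnes v₂ * x₂ := by
    linarith [K₂]
  rw [this]
  ring
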